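/- Let τ = [[τ₁, τ₂], [τ₂, τ₃]] be a complex symmetric 2×2 matrix whose imaginary part is positive definite. If (a, b, c, d, e) ∈ ℝ⁵ is nonzero and satisfies a·τ₁ + b·τ₂ + c·τ₃ + d·(τ₂² − τ₁·τ₃) + e = 0, then b² − 4ac − 4de > 0. -/

import Mathlib

theorem stmt8 (τ₁ τ₂ τ₃ : ℂ)
    (hpos : (!![τ₁.im, τ₂.im; τ₂.im, τ₃.im] : Matrix (Fin 2) (Fin 2) ℝ).PosDef)
    (a b c d e : ℝ) (hne : (a, b, c, d, e) ≠ (0, 0, 0, 0, 0))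
    (hrel : (a : ℂ) * τ₁ + (b : ℂ) * τ₂ + (c : ℂ) * τ₃ +
      (d : ℂ) * (τ₂ ^ 2 - τ₁ * τ₃) + (e : ℂ) = 0) :
    0 < b ^ 2 - 4 * a * c - 4 * d * e := by
  set x₁ := τ₁.re; set x₂ := τ₂.re; set x₃ := τ₃.re
  set y₁ := τ₁.im; set y₂ := τ₂.im; set y₃ := τ₃.im
  -- positivity facts from hpos
  have hdet : 0 < y₁ * y₃ - y₂ * y₂ := by
    have := hpos.det_pos
    rw [Matrix.det_fin_two_of] at this
    linarith
  have hy3 : 0 < y₃ := by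
    have h := hpos.dotProduct_mulVec_pos (x := ![0, 1]) (by
      intro h
      have := congrFun h 1
      simp at this)
    simpa [Matrix.mulVec, dotProduct, Fin.sum_univ_two] using h
  -- real and imaginary parts of the relation
  have hR : a * x₁ + b * x₂ + c * x₃ +
      d * (x₂ * x₂ - y₂ * y₂ - (x₁ * x₃ - y₁ * y₃)) + e = 0 := by
    have := congrArg Complex.re hrel
    simp [Complex.add_re, Complex.mul_re, Complex.sub_re, Complex.mul_im, pow_two] at this
    linarith
  have hI : a * y₁ + b * y₂ + c * y₃ +
      d * (x₂ * y₂ + y₂ * x₂ - (x₁ * y₃ + y₁ * x₃)) = 0 := by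
    have := congrArg Complex.im hrel
    simp [Complex.add_im, Complex.mul_im, Complex.sub_im, Complex.mul_re, pow_two] at this
    linarith
  set a' := a - d * x₃ with ha'
  set b' := b + 2 * d * x₂ with hb'
  set D := y₁ * y₃ - y₂ * y₂ with hD
  have key : y₃ ^ 2 * (b ^ 2 - 4 * a * c - 4 * d * e) =
      (b' * y₃ + 2 * a' * y₂) ^ 2 + 4 * a' ^ 2 * D + 4 * d ^ 2 * D * y₃ ^ 2 := by
    rw [ha', hb', hD]
    linear_combination (-4 * (a - d * x₃) * y₃) * hI + (-4 * d * y₃ ^ 2) * hR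
  have hsq : 0 ≤ (b' * y₃ + 2 * a' * y₂) ^ 2 := sq_nonneg _
  have hS : 0 < (b' * y₃ + 2 * a' * y₂) ^ 2 + 4 * a' ^ 2 * D + 4 * d ^ 2 * D * y₃ ^ 2 := by
    rcases eq_or_ne d 0 with hd | hd
    · rcases eq_or_ne a' 0 with ha0 | ha0
      · rcases eq_or_ne b' 0 with hb0 | hb0
        · exfalso
          rw [ha', hd] at ha0
          rw [hb', hd] at hb0
          have haz : a = 0 := by linarith
          have hbz : b = 0 := by linarith
          have hcz : c = 0 := by
            have hcy : c * y₃ = 0 := by rw [haz, hbz, hd] at hI; linarith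
            exact (mul_eq_zero.mp hcy).resolve_right (ne_of_gt hy3)
          have hez : e = 0 := by rw [haz, hbz, hcz, hd] at hR; linarith
          exact hne (by rw [haz, hbz, hcz, hd, hez])
        · have hb1 : b' * y₃ + 2 * a' * y₂ ≠ 0 := by
            rw [ha0]
            simpa using mul_ne_zero hb0 (ne_of_gt hy3)
          have h1 : 0 < (b' * y₃ + 2 * a' * y₂) ^ 2 :=
            lt_of_le_of_ne (sq_nonneg _) (Ne.symm (pow_ne_zero 2 hb1))
          have h2 : 0 ≤ 4 * a' ^ 2 * D := mul_nonneg (by positivity) hdet.le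
          have h3 : 0 ≤ 4 * d ^ 2 * D * y₃ ^ 2 :=
            mul_nonneg (mul_nonneg (by positivity) hdet.le) (by positivity)
          linarith
      · have h1 : 0 < a' ^ 2 := lt_of_le_of_ne (sq_nonneg _) (Ne.symm (pow_ne_zero 2 ha0))
        have h2 : 0 < 4 * a' ^ 2 * D := mul_pos (by linarith) hdet
        have h3 : 0 ≤ 4 * d ^ 2 * D * y₃ ^ 2 :=
          mul_nonneg (mul_nonneg (by positivity) hdet.le) (by positivity)
        linarith
    · have h1 : 0 < d ^ 2 := lt_of_le_of_ne (sq_nonneg _) (Ne.symm (pow_ne_zero 2 hd))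
      have h2 : 0 < 4 * d ^ 2 * D * y₃ ^ 2 :=
        mul_pos (mul_pos (by linarith) hdet) (by positivity)
      have h3 : 0 ≤ 4 * a' ^ 2 * D := mul_nonneg (by positivity) hdet.le
      linarith
  nlinarith [mul_pos hy3 hy3, key, hS]
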